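/- Let u≥3 be odd. Then 𝒮ᵘ_{vac,Λ} ≠ 0 and S^{BP}_{vac,Λ} ≠ 0 for every Λ∈P⁺ᵘ, and for all λ,μ,ν∈P⁺ᵘ the two Verlinde sums agree: N^{BP}(λ,μ,ν) = N^{(u,1)}(λ,μ,ν). (The Verlinde-formula fusion multiplicities of the Bershadsky–Polyakov minimal model coincide with those of the level-(u−3) sl₃ WZW model.) -/

import Mathlib

noncomputable section

open Complex

/-- The six elements of the Weyl group `S₃` of sl₃ acting on weights in
Dynkin-label coordinates: `id, w₁, w₂, w₁w₂, w₂w₁, w₃`. -/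
def wmap (w : Fin 6) (x : ℂ × ℂ) : ℂ × ℂ :=
  ![x, (-x.1, x.1 + x.2), (x.1 + x.2, -x.2), (-x.1 - x.2, x.1),
    (x.2, -x.1 - x.2), (-x.2, -x.1)] w

/-- The signs of the six Weyl group elements. -/
def wdet : Fin 6 → ℤ := ![1, -1, -1, 1, 1, -1]

/-- The normalised invariant bilinear form of sl₃ in Dynkin-label coordinates. -/
def bform (x y : ℂ × ℂ) : ℂ :=
  (2 * x.1 * y.1 + x.1 * y.2 + x.2 * y.1 + 2 * x.2 * y.2) / 3

/-- The Weyl vector `ρ = (1,1)`. -/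
def rho : ℂ × ℂ := (1, 1)

/-- The set `P⁺ᵘ` of triples of nonnegative integers summing to `u-3`. -/
def Pplus (u : ℕ) : Finset (ℕ × ℕ × ℕ) :=
  (Finset.range u ×ˢ Finset.range u ×ˢ Finset.range u).filter
    (fun l => l.1 + l.2.1 + l.2.2 = u - 3)

/-- The finite part `λ̄ = (λ₁,λ₂)` of a triple `λ = (λ₀,λ₁,λ₂)`. -/
def bar (l : ℕ × ℕ × ℕ) : ℂ × ℂ := ((l.2.1 : ℂ), (l.2.2 : ℂ))

/-- `j_λ = -(λ₁-λ₂)/3`. -/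
def jBP (l : ℕ × ℕ × ℕ) : ℂ := -(((l.2.1 : ℂ) - (l.2.2 : ℂ)) / 3)

/-- The level-`(u-3)` sl₃ WZW S-matrix entry `𝒮ᵘ_{λ,λ′}`. -/
def ScalP (u : ℕ) (l l' : ℕ × ℕ × ℕ) : ℂ :=
  (-I / (Real.sqrt 3 * u)) *
    ∑ w : Fin 6, (wdet w : ℂ) *
      exp (-2 * Real.pi * I * bform (wmap w (bar l + rho)) (bar l' + rho) / u)

/-- The Bershadsky–Polyakov minimal-model S-matrix. -/
def SBP (u : ℕ) (l l' : ℕ × ℕ × ℕ) : ℂ :=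
  (I / (Real.sqrt 3 * u)) * exp (2 * Real.pi * I * (jBP l + jBP l' - (u : ℂ) / 3)) *
    ∑ w : Fin 6, (wdet w : ℂ) *
      exp (-4 * Real.pi * I * bform (wmap w (bar l + rho)) (bar l' + rho) / u)

/-- The vacuum weight `vac = (u-3,0,0)`. -/
def vac (u : ℕ) : ℕ × ℕ × ℕ := (u - 3, 0, 0)

/-- The sl₃ WZW Verlinde sum `N^{(u,1)}(λ,μ,ν)`. -/
def Nsl (u : ℕ) (a b c : ℕ × ℕ × ℕ) : ℂ :=
  ∑ L ∈ Pplus u,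
    ScalP u a L * ScalP u b L * (starRingEnd ℂ) (ScalP u c L) / ScalP u (vac u) L

/-- The Bershadsky–Polyakov Verlinde sum `N^{BP}(λ,μ,ν)`. -/
def NBP (u : ℕ) (a b c : ℕ × ℕ × ℕ) : ℂ :=
  ∑ L ∈ Pplus u,
    SBP u a L * SBP u b L * (starRingEnd ℂ) (SBP u c L) / SBP u (vac u) L

lemma wmap_e0 (x : ℂ × ℂ) : wmap 0 x = x := rfl
lemma wmap_e1 (x : ℂ × ℂ) : wmap 1 x = (-x.1, x.1 + x.2) := rfl
lemma wmap_e2 (x : ℂ × ℂ) : wmap 2 x = (x.1 + x.2, -x.2) := rfl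
lemma wmap_e3 (x : ℂ × ℂ) : wmap 3 x = (-x.1 - x.2, x.1) := rfl
lemma wmap_e4 (x : ℂ × ℂ) : wmap 4 x = (x.2, -x.1 - x.2) := rfl
lemma wmap_e5 (x : ℂ × ℂ) : wmap 5 x = (-x.2, -x.1) := rfl

def wmul (g w : Fin 6) : Fin 6 :=
  match g, w with
  | 0, w => w
  | 1, 0 => 1 | 1, 1 => 0 | 1, 2 => 3 | 1, 3 => 2 | 1, 4 => 5 | 1, 5 => 4
  | 2, 0 => 2 | 2, 1 => 4 | 2, 2 => 0 | 2, 3 => 5 | 2, 4 => 1 | 2, 5 => 3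
  | 3, 0 => 3 | 3, 1 => 5 | 3, 2 => 1 | 3, 3 => 4 | 3, 4 => 0 | 3, 5 => 2
  | 4, 0 => 4 | 4, 1 => 2 | 4, 2 => 5 | 4, 3 => 0 | 4, 4 => 3 | 4, 5 => 1
  | 5, 0 => 5 | 5, 1 => 3 | 5, 2 => 4 | 5, 3 => 1 | 5, 4 => 2 | 5, 5 => 0

def winv (g : Fin 6) : Fin 6 :=
  match g with
  | 0 => 0 | 1 => 1 | 2 => 2 | 3 => 4 | 4 => 3 | 5 => 5

lemma wmap_wmul (g w : Fin 6) (x : ℂ × ℂ) : wmap (wmul g w) x = wmap g (wmap w x) := by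
  fin_cases g <;> fin_cases w <;>
    simp [wmul, wmap_e0, wmap_e1, wmap_e2, wmap_e3, wmap_e4, wmap_e5, Prod.ext_iff] <;>
    ring_nf <;> simp [add_comm, sub_eq_add_neg]

lemma wdet_wmul (g w : Fin 6) : wdet (wmul g w) = wdet g * wdet w := by revert g w; decide
lemma wmul_bij (g : Fin 6) : Function.Bijective (wmul g) := by revert g; decide
lemma winv_adj (g : Fin 6) (x y : ℂ × ℂ) :
    bform x (wmap g y) = bform (wmap (winv g) x) y := by
  fin_cases g <;>
    simp [winv, wmap_e0, wmap_e1, wmap_e2, wmap_e3, wmap_e4, wmap_e5, bform] <;> ring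
lemma wdet_winv (g : Fin 6) : wdet (winv g) = wdet g := by revert g; decide
lemma wdet_sq (g : Fin 6) : wdet g * wdet g = 1 := by revert g; decide

lemma engine (u : ℕ) (hu : (u:ℂ) ≠ 0) (x : ℂ × ℂ) (g : Fin 6) (Y T : ℂ × ℂ) (c : ℂ)
    (hT : ∀ w : Fin 6, exp (-2 * (Real.pi:ℂ) * I * bform (wmap w x) T) = c) :
    ∑ w : Fin 6, (wdet w : ℂ) *
        exp (-2 * (Real.pi:ℂ) * I * bform (wmap w x) (((u:ℂ) * T.1, (u:ℂ) * T.2) + wmap g Y) / u)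
      = c * (wdet g : ℂ) *
        ∑ w : Fin 6, (wdet w : ℂ) * exp (-2 * (Real.pi:ℂ) * I * bform (wmap w x) Y / u) := by
  set h := winv g with hh
  have key : ∀ w : Fin 6,
      exp (-2 * (Real.pi:ℂ) * I * bform (wmap w x) (((u:ℂ) * T.1, (u:ℂ) * T.2) + wmap g Y) / u)
        = c * exp (-2 * (Real.pi:ℂ) * I * bform (wmap (wmul h w) x) Y / u) := by
    intro w
    have hb : bform (wmap w x) (((u:ℂ) * T.1, (u:ℂ) * T.2) + wmap g Y)
        = (u:ℂ) * bform (wmap w x) T + bform (wmap (wmul h w) x) Y := by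
      rw [wmap_wmul, ← winv_adj]
      simp only [bform, Prod.fst_add, Prod.snd_add]
      ring
    rw [hb]
    have harg : -2 * (Real.pi:ℂ) * I * ((u:ℂ) * bform (wmap w x) T + bform (wmap (wmul h w) x) Y) / u
        = -2 * (Real.pi:ℂ) * I * bform (wmap w x) T
          + -2 * (Real.pi:ℂ) * I * bform (wmap (wmul h w) x) Y / u := by
      field_simp; ring
    rw [harg, exp_add, hT w]
  calc ∑ w : Fin 6, (wdet w : ℂ) *
        exp (-2 * (Real.pi:ℂ) * I * bform (wmap w x) (((u:ℂ) * T.1, (u:ℂ) * T.2) + wmap g Y) / u)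
      = ∑ w : Fin 6, c * ((wdet h : ℂ) *
          ((wdet (wmul h w) : ℂ) * exp (-2 * (Real.pi:ℂ) * I * bform (wmap (wmul h w) x) Y / u))) := by
        refine Finset.sum_congr rfl fun w _ => ?_
        rw [key w, wdet_wmul]
        have hsq : ((wdet h : ℂ)) * ((wdet h : ℂ) * (wdet w : ℂ)) = (wdet w : ℂ) := by
          rw [← mul_assoc, ← Int.cast_mul, wdet_sq]; simp
        push_cast
        linear_combination (-(c * cexp (-2 * (Real.pi:ℂ) * I * bform (wmap (wmul h w) x) Y / u))) * hsq
    _ = c * (wdet h : ℂ) * ∑ w : Fin 6, (wdet (wmul h w) : ℂ) *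
          exp (-2 * (Real.pi:ℂ) * I * bform (wmap (wmul h w) x) Y / u) := by
        simp only [Finset.mul_sum]
        exact Finset.sum_congr rfl fun w _ => by ring
    _ = c * (wdet g : ℂ) * ∑ w : Fin 6, (wdet w : ℂ) *
          exp (-2 * (Real.pi:ℂ) * I * bform (wmap w x) Y / u) := by
        rw [hh, wdet_winv]
        congr 1
        exact Fintype.sum_bijective (wmul h) (wmul_bij h)
          _ _ (fun w => rfl)

lemma wdet_e0 : wdet 0 = 1 := rfl
lemma wdet_e1 : wdet 1 = -1 := rfl
lemma wdet_e2 : wdet 2 = -1 := rfl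
lemma wdet_e3 : wdet 3 = 1 := rfl
lemma wdet_e4 : wdet 4 = 1 := rfl
lemma wdet_e5 : wdet 5 = -1 := rfl

lemma exp_neg_int (k : ℤ) : exp (-2 * (Real.pi:ℂ) * I * (k:ℂ)) = 1 := by
  rw [show -2 * (Real.pi:ℂ) * I * (k:ℂ) = (-k : ℤ) * (2 * (Real.pi:ℂ) * I) by push_cast; ring]
  exact Complex.exp_int_mul_two_pi_mul_I (-k)

lemma exp_shift (z : ℂ) (k : ℤ) :
    exp (-2 * (Real.pi:ℂ) * I * (z + (k:ℂ))) = exp (-2 * (Real.pi:ℂ) * I * z) := by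
  rw [mul_add, exp_add, exp_neg_int, mul_one]

lemma bform_rho_int (m n : ℤ) (w : Fin 6) :
    ∃ k : ℤ, bform (wmap w ((m:ℂ), (n:ℂ))) (1, 1) = (k:ℂ) := by
  fin_cases w
  · exact ⟨m + n, by simp [wmap_e0, bform]; push_cast; ring⟩
  · exact ⟨n, by simp [wmap_e1, bform]; push_cast; ring⟩
  · exact ⟨m, by simp [wmap_e2, bform]; push_cast; ring⟩
  · exact ⟨-n, by simp [wmap_e3, bform]; push_cast; ring⟩
  · exact ⟨-m, by simp [wmap_e4, bform]; push_cast; ring⟩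
  · exact ⟨-m - n, by simp [wmap_e5, bform]; push_cast; ring⟩

lemma hT_one (m n : ℤ) :
    ∀ w : Fin 6, exp (-2 * (Real.pi:ℂ) * I * bform (wmap w ((m:ℂ), (n:ℂ))) (1, 1)) = 1 := by
  intro w
  obtain ⟨k, hk⟩ := bform_rho_int m n w
  rw [hk, exp_neg_int]

lemma hT_zero (x : ℂ × ℂ) :
    ∀ w : Fin 6, exp (-2 * (Real.pi:ℂ) * I * bform (wmap w x) (0, 0)) = 1 := by
  intro w
  simp [bform]

def sigma (u : ℕ) (L : ℕ × ℕ × ℕ) : ℕ × ℕ × ℕ :=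
  if 2*L.2.1 + 2*L.2.2 + 4 < u then
    (u - (2*L.2.1 + 2*L.2.2 + 4) - 1, 2*L.2.1 + 1, 2*L.2.2 + 1)
  else if u < 2*L.2.1 + 2 then
    (2*L.2.2 + 1, 2*u - (2*L.2.1 + 2*L.2.2 + 4) - 1, 2*L.2.1 + 2 - u - 1)
  else if u < 2*L.2.2 + 2 then
    (2*L.2.1 + 1, 2*L.2.2 + 2 - u - 1, 2*u - (2*L.2.1 + 2*L.2.2 + 4) - 1)
  else
    ((2*L.2.1 + 2*L.2.2 + 4) - u - 1, u - (2*L.2.2 + 2) - 1, u - (2*L.2.1 + 2) - 1)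

def epsZ (u : ℕ) (L : ℕ × ℕ × ℕ) : ℤ :=
  if 2*L.2.1 + 2*L.2.2 + 4 < u then 1
  else if u < 2*L.2.1 + 2 then 1
  else if u < 2*L.2.2 + 2 then 1
  else -1

lemma mem_Pplus {u : ℕ} {L : ℕ × ℕ × ℕ} :
    L ∈ Pplus u ↔ L.1 < u ∧ L.2.1 < u ∧ L.2.2 < u ∧ L.1 + L.2.1 + L.2.2 = u - 3 := by
  simp [Pplus, Finset.mem_filter, Finset.mem_product, Finset.mem_range, and_assoc]

lemma SBP_eq (u : ℕ) (hu : 3 ≤ u) (hodd : u % 2 = 1) (l L : ℕ × ℕ × ℕ) (hL : L ∈ Pplus u) :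
    SBP u l L = -((epsZ u L : ℤ) : ℂ) *
      exp (2 * (Real.pi:ℂ) * I * (jBP l + jBP L - (u:ℂ)/3)) * ScalP u l (sigma u L) := by
  rw [mem_Pplus] at hL
  obtain ⟨h0, h1, h2, hsum⟩ := hL
  have hu0 : (u:ℂ) ≠ 0 := Nat.cast_ne_zero.mpr (by omega)
  set m : ℤ := (l.2.1 : ℤ) + 1 with hm
  set n : ℤ := (l.2.2 : ℤ) + 1 with hn
  have hx : bar l + rho = ((m:ℂ), (n:ℂ)) := by
    simp only [bar, rho, Prod.mk_add_mk, Prod.ext_iff, hm, hn]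
    constructor <;> push_cast <;> ring
  set L1 := L.2.1 with hL1
  set L2 := L.2.2 with hL2
  -- the doubled weight
  have hdouble : ∀ w : Fin 6,
      (-4 * (Real.pi:ℂ) * I * bform (wmap w ((m:ℂ),(n:ℂ))) (bar L + rho) / u)
      = -2 * (Real.pi:ℂ) * I * bform (wmap w ((m:ℂ),(n:ℂ))) ((2*(L1:ℂ)+2, 2*(L2:ℂ)+2)) / u := by
    intro w
    have : bform (wmap w ((m:ℂ),(n:ℂ))) ((2*(L1:ℂ)+2, 2*(L2:ℂ)+2))
        = 2 * bform (wmap w ((m:ℂ),(n:ℂ))) (bar L + rho) := by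
      simp only [bform, bar, rho, Prod.mk_add_mk, Prod.fst, Prod.snd]
      ring
    rw [this]; ring
  have key : (∑ w : Fin 6, (wdet w : ℂ) *
        exp (-4 * (Real.pi:ℂ) * I * bform (wmap w (bar l + rho)) (bar L + rho) / u))
      = ((epsZ u L : ℤ) : ℂ) * ∑ w : Fin 6, (wdet w : ℂ) *
        exp (-2 * (Real.pi:ℂ) * I * bform (wmap w (bar l + rho)) (bar (sigma u L) + rho) / u) := by
    rw [hx]
    by_cases c1 : 2*L1 + 2*L2 + 4 < u
    · -- region 1
      have hP : bar (sigma u L) + rho = ((2*(L1:ℂ)+2, 2*(L2:ℂ)+2) : ℂ × ℂ) := by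
        simp only [sigma, ← hL1, ← hL2, if_pos c1, bar, rho, Prod.mk_add_mk, Prod.ext_iff]
        constructor <;> push_cast <;> ring
      have := engine u hu0 ((m:ℂ),(n:ℂ)) 0 ((2*(L1:ℂ)+2, 2*(L2:ℂ)+2)) (0,0) 1
        (hT_zero ((m:ℂ),(n:ℂ)))
      simp only [wmap_e0, epsZ, ← hL1, ← hL2, if_pos c1] at this ⊢
      rw [hP]
      calc (∑ w : Fin 6, (wdet w : ℂ) *
            exp (-4 * (Real.pi:ℂ) * I * bform (wmap w ((m:ℂ),(n:ℂ))) (bar L + rho) / u))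
          = ∑ w : Fin 6, (wdet w : ℂ) *
            exp (-2 * (Real.pi:ℂ) * I * bform (wmap w ((m:ℂ),(n:ℂ)))
              (((u:ℂ) * (0:ℂ), (u:ℂ) * (0:ℂ)) + (2*(L1:ℂ)+2, 2*(L2:ℂ)+2)) / u) := by
            refine Finset.sum_congr rfl fun w _ => ?_
            rw [show ((u:ℂ) * (0:ℂ), (u:ℂ) * (0:ℂ)) + ((2*(L1:ℂ)+2, 2*(L2:ℂ)+2) : ℂ × ℂ)
              = ((2*(L1:ℂ)+2, 2*(L2:ℂ)+2) : ℂ × ℂ) by simp, hdouble w]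
        _ = ((1:ℤ):ℂ) * ∑ w : Fin 6, (wdet w : ℂ) *
            exp (-2 * (Real.pi:ℂ) * I * bform (wmap w ((m:ℂ),(n:ℂ))) ((2*(L1:ℂ)+2, 2*(L2:ℂ)+2)) / u) := by
            rw [this]; norm_num [wdet_e0]
    · by_cases c2 : u < 2*L1 + 2
      · -- region 2 : g = 4
        have e1 : ((2*u - (2*L1 + 2*L2 + 4) - 1 : ℕ) : ℂ) = 2*(u:ℂ) - 2*L1 - 2*L2 - 5 := by
          have h : (2*u - (2*L1 + 2*L2 + 4) - 1) + (2*L1 + 2*L2 + 5) = 2*u := by omega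
          have := congrArg (fun t : ℕ => (t:ℂ)) h
          push_cast at this; linear_combination this
        have e2 : ((2*L1 + 2 - u - 1 : ℕ) : ℂ) = 2*(L1:ℂ) + 1 - u := by
          have h : (2*L1 + 2 - u - 1) + (u + 1) = 2*L1 + 2 := by omega
          have := congrArg (fun t : ℕ => (t:ℂ)) h
          push_cast at this; linear_combination this
        have hP : bar (sigma u L) + rho
            = ((2*(u:ℂ) - 2*L1 - 2*L2 - 4, 2*(L1:ℂ) + 2 - u) : ℂ × ℂ) := by
          simp only [sigma, ← hL1, ← hL2, if_neg c1, if_pos c2, bar, rho, Prod.mk_add_mk,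
            Prod.ext_iff]
          rw [e1, e2]
          constructor <;> ring
        have := engine u hu0 ((m:ℂ),(n:ℂ)) 4
          ((2*(u:ℂ) - 2*L1 - 2*L2 - 4, 2*(L1:ℂ) + 2 - u)) (1,1) 1 (hT_one m n)
        simp only [wmap_e4, epsZ, ← hL1, ← hL2, if_neg c1, if_pos c2] at this ⊢
        rw [hP]
        calc (∑ w : Fin 6, (wdet w : ℂ) *
              exp (-4 * (Real.pi:ℂ) * I * bform (wmap w ((m:ℂ),(n:ℂ))) (bar L + rho) / u))
            = ∑ w : Fin 6, (wdet w : ℂ) *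
              exp (-2 * (Real.pi:ℂ) * I * bform (wmap w ((m:ℂ),(n:ℂ)))
                (((u:ℂ) * (1:ℂ), (u:ℂ) * (1:ℂ)) +
                  ((2*(L1:ℂ) + 2 - u, -(2*(u:ℂ) - 2*L1 - 2*L2 - 4) - (2*(L1:ℂ) + 2 - u)))) / u) := by
              refine Finset.sum_congr rfl fun w _ => ?_
              rw [show ((u:ℂ) * (1:ℂ), (u:ℂ) * (1:ℂ)) +
                  ((2*(L1:ℂ) + 2 - u, -(2*(u:ℂ) - 2*L1 - 2*L2 - 4) - (2*(L1:ℂ) + 2 - u)) : ℂ × ℂ)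
                = ((2*(L1:ℂ)+2, 2*(L2:ℂ)+2) : ℂ × ℂ) by
                  rw [Prod.mk_add_mk, Prod.mk.injEq]; exact ⟨by ring, by ring⟩, hdouble w]
          _ = ((1:ℤ):ℂ) * ∑ w : Fin 6, (wdet w : ℂ) *
              exp (-2 * (Real.pi:ℂ) * I * bform (wmap w ((m:ℂ),(n:ℂ)))
                ((2*(u:ℂ) - 2*L1 - 2*L2 - 4, 2*(L1:ℂ) + 2 - u)) / u) := by
              rw [this]; norm_num [wdet_e4]
      · by_cases c3 : u < 2*L2 + 2
        · -- region 3 : g = 3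
          have e1 : ((2*L2 + 2 - u - 1 : ℕ) : ℂ) = 2*(L2:ℂ) + 1 - u := by
            have h : (2*L2 + 2 - u - 1) + (u + 1) = 2*L2 + 2 := by omega
            have := congrArg (fun t : ℕ => (t:ℂ)) h
            push_cast at this; linear_combination this
          have e2 : ((2*u - (2*L1 + 2*L2 + 4) - 1 : ℕ) : ℂ) = 2*(u:ℂ) - 2*L1 - 2*L2 - 5 := by
            have h : (2*u - (2*L1 + 2*L2 + 4) - 1) + (2*L1 + 2*L2 + 5) = 2*u := by omega
            have := congrArg (fun t : ℕ => (t:ℂ)) h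
            push_cast at this; linear_combination this
          have hP : bar (sigma u L) + rho
              = ((2*(L2:ℂ) + 2 - u, 2*(u:ℂ) - 2*L1 - 2*L2 - 4) : ℂ × ℂ) := by
            simp only [sigma, ← hL1, ← hL2, if_neg c1, if_neg c2, if_pos c3, bar, rho,
              Prod.mk_add_mk, Prod.ext_iff]
            rw [e1, e2]
            constructor <;> ring
          have := engine u hu0 ((m:ℂ),(n:ℂ)) 3
            ((2*(L2:ℂ) + 2 - u, 2*(u:ℂ) - 2*L1 - 2*L2 - 4)) (1,1) 1 (hT_one m n)
          simp only [wmap_e3, epsZ, ← hL1, ← hL2, if_neg c1, if_neg c2, if_pos c3] at this ⊢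
          rw [hP]
          calc (∑ w : Fin 6, (wdet w : ℂ) *
                exp (-4 * (Real.pi:ℂ) * I * bform (wmap w ((m:ℂ),(n:ℂ))) (bar L + rho) / u))
              = ∑ w : Fin 6, (wdet w : ℂ) *
                exp (-2 * (Real.pi:ℂ) * I * bform (wmap w ((m:ℂ),(n:ℂ)))
                  (((u:ℂ) * (1:ℂ), (u:ℂ) * (1:ℂ)) +
                    ((-(2*(L2:ℂ) + 2 - u) - (2*(u:ℂ) - 2*L1 - 2*L2 - 4), 2*(L2:ℂ) + 2 - u))) / u) := by
                refine Finset.sum_congr rfl fun w _ => ?_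
                rw [show ((u:ℂ) * (1:ℂ), (u:ℂ) * (1:ℂ)) +
                    ((-(2*(L2:ℂ) + 2 - u) - (2*(u:ℂ) - 2*L1 - 2*L2 - 4), 2*(L2:ℂ) + 2 - u) : ℂ × ℂ)
                  = ((2*(L1:ℂ)+2, 2*(L2:ℂ)+2) : ℂ × ℂ) by
                    rw [Prod.mk_add_mk, Prod.mk.injEq]; exact ⟨by ring, by ring⟩, hdouble w]
            _ = ((1:ℤ):ℂ) * ∑ w : Fin 6, (wdet w : ℂ) *
                exp (-2 * (Real.pi:ℂ) * I * bform (wmap w ((m:ℂ),(n:ℂ)))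
                  ((2*(L2:ℂ) + 2 - u, 2*(u:ℂ) - 2*L1 - 2*L2 - 4)) / u) := by
                rw [this]; norm_num [wdet_e3]
        · -- region 4 : g = 5
          have e1 : ((u - (2*L2 + 2) - 1 : ℕ) : ℂ) = (u:ℂ) - 2*L2 - 3 := by
            have h : (u - (2*L2 + 2) - 1) + (2*L2 + 3) = u := by omega
            have := congrArg (fun t : ℕ => (t:ℂ)) h
            push_cast at this; linear_combination this
          have e2 : ((u - (2*L1 + 2) - 1 : ℕ) : ℂ) = (u:ℂ) - 2*L1 - 3 := by
            have h : (u - (2*L1 + 2) - 1) + (2*L1 + 3) = u := by omega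
            have := congrArg (fun t : ℕ => (t:ℂ)) h
            push_cast at this; linear_combination this
          have hP : bar (sigma u L) + rho
              = (((u:ℂ) - 2*L2 - 2, (u:ℂ) - 2*L1 - 2) : ℂ × ℂ) := by
            simp only [sigma, ← hL1, ← hL2, if_neg c1, if_neg c2, if_neg c3, bar, rho,
              Prod.mk_add_mk, Prod.ext_iff]
            rw [e1, e2]
            constructor <;> ring
          have := engine u hu0 ((m:ℂ),(n:ℂ)) 5
            (((u:ℂ) - 2*L2 - 2, (u:ℂ) - 2*L1 - 2)) (1,1) 1 (hT_one m n)
          simp only [wmap_e5, epsZ, ← hL1, ← hL2, if_neg c1, if_neg c2, if_neg c3] at this ⊢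
          rw [hP]
          calc (∑ w : Fin 6, (wdet w : ℂ) *
                exp (-4 * (Real.pi:ℂ) * I * bform (wmap w ((m:ℂ),(n:ℂ))) (bar L + rho) / u))
              = ∑ w : Fin 6, (wdet w : ℂ) *
                exp (-2 * (Real.pi:ℂ) * I * bform (wmap w ((m:ℂ),(n:ℂ)))
                  (((u:ℂ) * (1:ℂ), (u:ℂ) * (1:ℂ)) +
                    ((-((u:ℂ) - 2*L1 - 2), -((u:ℂ) - 2*L2 - 2)))) / u) := by
                refine Finset.sum_congr rfl fun w _ => ?_
                rw [show ((u:ℂ) * (1:ℂ), (u:ℂ) * (1:ℂ)) +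
                    ((-((u:ℂ) - 2*L1 - 2), -((u:ℂ) - 2*L2 - 2)) : ℂ × ℂ)
                  = ((2*(L1:ℂ)+2, 2*(L2:ℂ)+2) : ℂ × ℂ) by
                    rw [Prod.mk_add_mk, Prod.mk.injEq]; exact ⟨by ring, by ring⟩, hdouble w]
            _ = ((-1:ℤ):ℂ) * ∑ w : Fin 6, (wdet w : ℂ) *
                exp (-2 * (Real.pi:ℂ) * I * bform (wmap w ((m:ℂ),(n:ℂ)))
                  (((u:ℂ) - 2*L2 - 2, (u:ℂ) - 2*L1 - 2)) / u) := by
                rw [this]; norm_num [wdet_e5]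
  rw [SBP, ScalP, key, hx]
  push_cast
  ring

lemma sigma_mem (u : ℕ) (hu : 3 ≤ u) (hodd : u % 2 = 1) {L : ℕ × ℕ × ℕ}
    (hL : L ∈ Pplus u) : sigma u L ∈ Pplus u := by
  rw [mem_Pplus] at hL ⊢
  obtain ⟨h0, h1, h2, hs⟩ := hL
  unfold sigma
  split_ifs <;> dsimp only <;> omega

lemma sigma_inj (u : ℕ) (hu : 3 ≤ u) (hodd : u % 2 = 1) :
    ∀ L ∈ Pplus u, ∀ L' ∈ Pplus u, sigma u L = sigma u L' → L = L' := by
  intro L hL L' hL' h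
  obtain ⟨A0, A1, A2⟩ := L
  obtain ⟨B0, B1, B2⟩ := L'
  rw [mem_Pplus] at hL hL'
  dsimp only at hL hL'
  simp only [sigma] at h
  split_ifs at h <;> simp only [Prod.mk.injEq] at h ⊢ <;> omega

lemma sigma_sum (u : ℕ) (hu : 3 ≤ u) (hodd : u % 2 = 1) (f : ℕ × ℕ × ℕ → ℂ) :
    ∑ L ∈ Pplus u, f (sigma u L) = ∑ L ∈ Pplus u, f L := by
  have hsurj := Finset.surj_on_of_inj_on_of_card_le (s := Pplus u) (t := Pplus u)
    (fun L _ => sigma u L) (fun L hL => sigma_mem u hu hodd hL)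
    (fun L L' hL hL' h => sigma_inj u hu hodd L hL L' hL' h) le_rfl
  exact Finset.sum_bij (fun L hL => sigma u L) (fun L hL => sigma_mem u hu hodd hL)
    (fun L hL L' hL' h => sigma_inj u hu hodd L hL L' hL' h)
    (fun M hM => by obtain ⟨L, hL, hLM⟩ := hsurj M hM; exact ⟨L, hL, hLM.symm⟩)
    (fun L hL => rfl)

def rot (L : ℕ × ℕ × ℕ) : ℕ × ℕ × ℕ := (L.2.2, L.1, L.2.1)

lemma rot_mem (u : ℕ) {L : ℕ × ℕ × ℕ} (hL : L ∈ Pplus u) : rot L ∈ Pplus u := by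
  rw [mem_Pplus] at hL ⊢
  unfold rot
  dsimp only
  omega

lemma rot_sum (u : ℕ) (f : ℕ × ℕ × ℕ → ℂ) :
    ∑ L ∈ Pplus u, f (rot L) = ∑ L ∈ Pplus u, f L := by
  refine Finset.sum_nbij' (i := fun L => rot L) (j := fun L => (L.2.1, L.2.2, L.1))
    (fun L hL => rot_mem u hL) (fun L hL => ?_) (fun L _ => rfl) (fun L _ => rfl)
    (fun L _ => rfl)
  rw [mem_Pplus] at hL ⊢
  dsimp only
  omega

lemma Scal_rot (u : ℕ) (hu : 3 ≤ u) (l L : ℕ × ℕ × ℕ) (hL : L ∈ Pplus u) :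
    ScalP u l (rot L) = exp (-2 * (Real.pi:ℂ) * I * jBP l) * ScalP u l L := by
  rw [mem_Pplus] at hL
  obtain ⟨h0, h1, h2, hs⟩ := hL
  have hu0 : (u:ℂ) ≠ 0 := Nat.cast_ne_zero.mpr (by omega)
  set m : ℤ := (l.2.1 : ℤ) + 1 with hm
  set n : ℤ := (l.2.2 : ℤ) + 1 with hn
  have hx : bar l + rho = ((m:ℂ), (n:ℂ)) := by
    simp only [bar, rho, Prod.mk_add_mk, Prod.ext_iff, hm, hn]
    constructor <;> push_cast <;> ring
  set c : ℂ := exp (-2 * (Real.pi:ℂ) * I * ((2*(m:ℂ) + n)/3)) with hc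
  have hT : ∀ w : Fin 6,
      exp (-2 * (Real.pi:ℂ) * I * bform (wmap w ((m:ℂ),(n:ℂ))) (1, 0)) = c := by
    have hb : ∀ w : Fin 6, ∃ k : ℤ,
        bform (wmap w ((m:ℂ),(n:ℂ))) (1, 0) = (2*(m:ℂ)+n)/3 + (k:ℂ) := by
      intro w
      fin_cases w
      · exact ⟨0, by first | (simp [wmap_e0, bform]; push_cast; ring) | simp [wmap_e0, bform]⟩
      · exact ⟨-m, by first | (simp [wmap_e1, bform]; push_cast; ring) | simp [wmap_e1, bform]⟩
      · exact ⟨0, by first | (simp [wmap_e2, bform]; push_cast; ring) | simp [wmap_e2, bform]⟩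
      · exact ⟨-m - n, by first | (simp [wmap_e3, bform]; push_cast; ring) | simp [wmap_e3, bform]⟩
      · exact ⟨-m, by first | (simp [wmap_e4, bform]; push_cast; ring) | simp [wmap_e4, bform]⟩
      · exact ⟨-m - n, by first | (simp [wmap_e5, bform]; push_cast; ring) | simp [wmap_e5, bform]⟩
    intro w
    obtain ⟨k, hk⟩ := hb w
    rw [hk, exp_shift]
  have hL0 : ((L.1 : ℕ) : ℂ) = (u:ℂ) - 3 - L.2.1 - L.2.2 := by
    have h : L.1 + L.2.1 + L.2.2 + 3 = u := by omega
    have := congrArg (fun t : ℕ => (t:ℂ)) h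
    push_cast at this; linear_combination this
  have hrot : bar (rot L) + rho
      = (((u:ℂ) * (1:ℂ), (u:ℂ) * (0:ℂ)) + wmap 3 (((L.2.1:ℂ)+1, (L.2.2:ℂ)+1))) := by
    rw [wmap_e3]
    simp only [bar, rot, rho, Prod.mk_add_mk, Prod.mk.injEq]
    constructor
    · rw [hL0]; ring
    · ring
  have hbarL : bar L + rho = (((L.2.1:ℂ)+1, (L.2.2:ℂ)+1) : ℂ × ℂ) := by
    simp only [bar, rho, Prod.mk_add_mk]
  have heng := engine u hu0 ((m:ℂ),(n:ℂ)) 3 (((L.2.1:ℂ)+1, (L.2.2:ℂ)+1)) (1,0) c hT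
  have hcc : c = exp (-2 * (Real.pi:ℂ) * I * jBP l) := by
    rw [hc, show (2*(m:ℂ)+n)/3 = jBP l + (((l.2.1:ℤ) + 1 : ℤ):ℂ) by
      simp only [jBP, hm, hn]; push_cast; ring, exp_shift]
  rw [ScalP, ScalP, hx, hrot]
  simp only [heng, wdet_e3, hcc]
  rw [hbarL]
  push_cast
  ring

lemma jBP_vac (u : ℕ) : jBP (vac u) = 0 := by simp [jBP, vac]

lemma conj_jBP (l : ℕ × ℕ × ℕ) : (starRingEnd ℂ) (jBP l) = jBP l := by
  simp [jBP, map_ofNat]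

lemma scal_div (k1 k2 k3 k4 A B C V : ℂ) (h4 : k4 ≠ 0) :
    (k1*A) * (k2*B) * (k3*C) / (k4*V) = (k1*k2*k3/k4) * (A*B*C/V) := by
  rcases eq_or_ne V 0 with hV | hV
  · simp [hV]
  · field_simp

lemma trig_id (x y : ℝ) : Real.sin (2*x + 2*y) - Real.sin (2*x) - Real.sin (2*y)
    = -(4 * Real.sin x * Real.sin y * Real.sin (x+y)) := by
  rw [show (2*x + 2*y) = 2*(x+y) by ring, Real.sin_two_mul, Real.sin_two_mul,
    Real.sin_two_mul, Real.sin_add, Real.cos_add]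
  linear_combination (2*Real.sin x*Real.cos x) * (Real.sin_sq_add_cos_sq y)
    + (2*Real.sin y*Real.cos y) * (Real.sin_sq_add_cos_sq x)

lemma pair_sin (θ : ℝ) :
    exp (-((θ:ℂ)*I)) - exp ((θ:ℂ)*I) = -(2*I*((Real.sin θ : ℝ):ℂ)) := by
  rw [show -((θ:ℂ)*I) = ((-θ:ℝ):ℂ)*I by push_cast; ring, Complex.exp_mul_I,
    Complex.exp_mul_I]
  push_cast [Complex.cos_neg, Complex.sin_neg]
  ring

lemma Scal_vac_ne (u : ℕ) (hu : 3 ≤ u) (L : ℕ × ℕ × ℕ) (hL : L ∈ Pplus u) :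
    ScalP u (vac u) L ≠ 0 := by
  rw [mem_Pplus] at hL
  obtain ⟨h0, h1, h2, hs⟩ := hL
  have hu0 : (u:ℂ) ≠ 0 := Nat.cast_ne_zero.mpr (by omega)
  have hu0R : (0:ℝ) < u := by exact_mod_cast (by omega : 0 < u)
  set xr : ℝ := Real.pi * ((L.2.1:ℝ)+1) / u with hxr
  set yr : ℝ := Real.pi * ((L.2.2:ℝ)+1) / u with hyr
  have hbar : bar (vac u) + rho = ((1:ℂ),(1:ℂ)) := by
    simp [bar, vac, rho, Prod.ext_iff, Prod.fst_add, Prod.snd_add]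
  have hbarL : bar L + rho = (((L.2.1:ℂ)+1, (L.2.2:ℂ)+1) : ℂ × ℂ) := by
    simp [bar, rho, Prod.ext_iff, Prod.fst_add, Prod.snd_add]
  have E0 : -2*(Real.pi:ℂ)*I * bform (wmap 0 ((1:ℂ),(1:ℂ))) (((L.2.1:ℂ)+1, (L.2.2:ℂ)+1)) / u
      = -(((2*xr + 2*yr : ℝ):ℂ)*I) := by
    rw [wmap_e0]; simp only [bform, hxr, hyr]; push_cast; field_simp; ring
  have E1 : -2*(Real.pi:ℂ)*I * bform (wmap 1 ((1:ℂ),(1:ℂ))) (((L.2.1:ℂ)+1, (L.2.2:ℂ)+1)) / u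
      = -(((2*yr : ℝ):ℂ)*I) := by
    rw [wmap_e1]; simp only [bform, hyr]; push_cast; field_simp; ring
  have E2 : -2*(Real.pi:ℂ)*I * bform (wmap 2 ((1:ℂ),(1:ℂ))) (((L.2.1:ℂ)+1, (L.2.2:ℂ)+1)) / u
      = -(((2*xr : ℝ):ℂ)*I) := by
    rw [wmap_e2]; simp only [bform, hxr]; push_cast; field_simp; ring
  have E3 : -2*(Real.pi:ℂ)*I * bform (wmap 3 ((1:ℂ),(1:ℂ))) (((L.2.1:ℂ)+1, (L.2.2:ℂ)+1)) / u
      = ((2*xr : ℝ):ℂ)*I := by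
    rw [wmap_e3]; simp only [bform, hxr]; push_cast; field_simp; ring
  have E4 : -2*(Real.pi:ℂ)*I * bform (wmap 4 ((1:ℂ),(1:ℂ))) (((L.2.1:ℂ)+1, (L.2.2:ℂ)+1)) / u
      = ((2*yr : ℝ):ℂ)*I := by
    rw [wmap_e4]; simp only [bform, hyr]; push_cast; field_simp; ring
  have E5 : -2*(Real.pi:ℂ)*I * bform (wmap 5 ((1:ℂ),(1:ℂ))) (((L.2.1:ℂ)+1, (L.2.2:ℂ)+1)) / u
      = ((2*xr + 2*yr : ℝ):ℂ)*I := by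
    rw [wmap_e5]; simp only [bform, hxr, hyr]; push_cast; field_simp; ring
  have key : ScalP u (vac u) L
      = 8 * ((Real.sin xr : ℝ):ℂ) * ((Real.sin yr : ℝ):ℂ) * ((Real.sin (xr+yr) : ℝ):ℂ)
        / (((Real.sqrt 3 : ℝ):ℂ) * (u:ℂ)) := by
    rw [ScalP]
    simp only [hbar, hbarL]
    rw [Fin.sum_univ_six, E0, E1, E2, E3, E4, E5, wdet_e0, wdet_e1, wdet_e2, wdet_e3,
      wdet_e4, wdet_e5]
    have p1 := pair_sin (2*xr + 2*yr)
    have p2 := pair_sin (2*xr)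
    have p3 := pair_sin (2*yr)
    have trC : ((Real.sin (2*xr+2*yr) : ℝ):ℂ) - ((Real.sin (2*xr) : ℝ):ℂ)
        - ((Real.sin (2*yr) : ℝ):ℂ)
        = -(4*((Real.sin xr : ℝ):ℂ)*((Real.sin yr : ℝ):ℂ)*((Real.sin (xr+yr) : ℝ):ℂ)) := by
      exact_mod_cast congrArg (fun t : ℝ => (t:ℂ)) (trig_id xr yr)
    linear_combination (-I/(((Real.sqrt 3:ℝ):ℂ)*(u:ℂ))) * p1
      + (I/(((Real.sqrt 3:ℝ):ℂ)*(u:ℂ))) * p2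
      + (I/(((Real.sqrt 3:ℝ):ℂ)*(u:ℂ))) * p3
      + (2*I*I/(((Real.sqrt 3:ℝ):ℂ)*(u:ℂ))) * trC
      + (-(8*((Real.sin xr : ℝ):ℂ)*((Real.sin yr : ℝ):ℂ)*((Real.sin (xr+yr) : ℝ):ℂ)
          /(((Real.sqrt 3:ℝ):ℂ)*(u:ℂ)))) * Complex.I_mul_I
  have hL1u : ((L.2.1:ℝ) + 1) < u := by exact_mod_cast (by omega : L.2.1 + 1 < u)
  have hL2u : ((L.2.2:ℝ) + 1) < u := by exact_mod_cast (by omega : L.2.2 + 1 < u)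
  have hL12u : ((L.2.1:ℝ) + 1) + ((L.2.2:ℝ) + 1) < u := by
    exact_mod_cast (by omega : L.2.1 + 1 + (L.2.2 + 1) < u)
  have hπ := Real.pi_pos
  have hx1 : 0 < xr := by rw [hxr]; positivity
  have hy1 : 0 < yr := by rw [hyr]; positivity
  have hx2 : xr < Real.pi := by
    rw [hxr, div_lt_iff₀ hu0R]; nlinarith
  have hy2 : yr < Real.pi := by
    rw [hyr, div_lt_iff₀ hu0R]; nlinarith
  have hxy2 : xr + yr < Real.pi := by
    rw [hxr, hyr, ← add_div, div_lt_iff₀ hu0R]; nlinarith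
  have s1 := Real.sin_pos_of_pos_of_lt_pi hx1 hx2
  have s2 := Real.sin_pos_of_pos_of_lt_pi hy1 hy2
  have s3 := Real.sin_pos_of_pos_of_lt_pi (by positivity) hxy2
  have hpos : 0 < 8 * (Real.sin xr * Real.sin yr * Real.sin (xr+yr)) / (Real.sqrt 3 * u) := by
    have h3 : 0 < Real.sqrt 3 := Real.sqrt_pos.mpr (by norm_num)
    positivity
  have key2 : ScalP u (vac u) L
      = ((8 * (Real.sin xr * Real.sin yr * Real.sin (xr+yr)) / (Real.sqrt 3 * u) : ℝ) : ℂ) := by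
    rw [key]; push_cast; ring
  rw [key2]
  exact Complex.ofReal_ne_zero.mpr (ne_of_gt hpos)

lemma conj_phase (u : ℕ) (l L : ℕ × ℕ × ℕ) :
    (starRingEnd ℂ) (exp (2*(Real.pi:ℂ)*I*(jBP l + jBP L - (u:ℂ)/3)))
      = exp (-(2*(Real.pi:ℂ)*I*(jBP l + jBP L - (u:ℂ)/3))) := by
  rw [← Complex.exp_conj]
  congr 1
  simp only [map_mul, map_sub, map_add, map_div₀, map_ofNat, conj_jBP, Complex.conj_I,
    Complex.conj_ofReal, Complex.conj_natCast]
  ring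

lemma conj_phase2 (l : ℕ × ℕ × ℕ) :
    (starRingEnd ℂ) (exp (-2*(Real.pi:ℂ)*I*jBP l)) = exp (2*(Real.pi:ℂ)*I*jBP l) := by
  rw [← Complex.exp_conj]
  congr 1
  simp only [map_mul, map_neg, map_ofNat, conj_jBP, Complex.conj_I, Complex.conj_ofReal]
  ring

lemma ratio_helper (D Ea Eb Ec Ev Ω : ℂ) (hD : D = 1 ∨ D = -1) (hEv : Ev ≠ 0)
    (hexp : Ea * Eb * Ec = Ω * Ev) :
    (-D * Ea) * (-D * Eb) * (-D * Ec) / (-D * Ev) = Ω := by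
  have hDne : -D ≠ 0 := by rcases hD with h | h <;> rw [h] <;> norm_num
  rw [div_eq_iff (mul_ne_zero hDne hEv)]
  rcases hD with h | h <;> rw [h] <;>
    [(linear_combination (-1 : ℂ) * hexp); linear_combination hexp]

lemma epsC_pm (u : ℕ) (L : ℕ × ℕ × ℕ) :
    ((epsZ u L : ℤ):ℂ) = 1 ∨ ((epsZ u L : ℤ):ℂ) = -1 := by
  unfold epsZ; split_ifs <;> norm_num

lemma termA (u : ℕ) (hu : 3 ≤ u) (hodd : u % 2 = 1) (a b c L : ℕ × ℕ × ℕ)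
    (hL : L ∈ Pplus u) :
    SBP u a L * SBP u b L * (starRingEnd ℂ) (SBP u c L) / SBP u (vac u) L
      = exp (2*(Real.pi:ℂ)*I*(jBP a + jBP b - jBP c)) *
        (ScalP u a (sigma u L) * ScalP u b (sigma u L) *
          (starRingEnd ℂ) (ScalP u c (sigma u L)) / ScalP u (vac u) (sigma u L)) := by
  rw [SBP_eq u hu hodd a L hL, SBP_eq u hu hodd b L hL, SBP_eq u hu hodd c L hL,
    SBP_eq u hu hodd (vac u) L hL]
  rw [map_mul, map_mul, map_neg, map_intCast, conj_phase]
  have hDpm := epsC_pm u L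
  have hexp : exp (2*(Real.pi:ℂ)*I*(jBP a + jBP L - (u:ℂ)/3))
      * exp (2*(Real.pi:ℂ)*I*(jBP b + jBP L - (u:ℂ)/3))
      * exp (-(2*(Real.pi:ℂ)*I*(jBP c + jBP L - (u:ℂ)/3)))
      = exp (2*(Real.pi:ℂ)*I*(jBP a + jBP b - jBP c))
        * exp (2*(Real.pi:ℂ)*I*(jBP (vac u) + jBP L - (u:ℂ)/3)) := by
    rw [← Complex.exp_add, ← Complex.exp_add, ← Complex.exp_add, jBP_vac]
    congr 1
    ring
  have hDne : -((epsZ u L : ℤ):ℂ) ≠ 0 := by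
    rcases hDpm with h | h <;> rw [h] <;> norm_num
  rw [scal_div _ _ _ _ _ _ _ _ (mul_ne_zero hDne (Complex.exp_ne_zero _))]
  rw [ratio_helper _ _ _ _ _ _ hDpm (Complex.exp_ne_zero _) hexp]

lemma NBP_eq (u : ℕ) (hu : 3 ≤ u) (hodd : u % 2 = 1) (a b c : ℕ × ℕ × ℕ) :
    NBP u a b c = exp (2*(Real.pi:ℂ)*I*(jBP a + jBP b - jBP c)) * Nsl u a b c := by
  rw [NBP, Nsl, Finset.mul_sum]
  have h2 := sigma_sum u hu hodd (fun M => exp (2*(Real.pi:ℂ)*I*(jBP a + jBP b - jBP c)) *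
    (ScalP u a M * ScalP u b M * (starRingEnd ℂ) (ScalP u c M) / ScalP u (vac u) M))
  rw [← h2]
  exact Finset.sum_congr rfl fun L hL => termA u hu hodd a b c L hL

lemma termB (u : ℕ) (hu : 3 ≤ u) (a b c L : ℕ × ℕ × ℕ) (hL : L ∈ Pplus u) :
    ScalP u a (rot L) * ScalP u b (rot L) * (starRingEnd ℂ) (ScalP u c (rot L))
        / ScalP u (vac u) (rot L)
      = exp (-(2*(Real.pi:ℂ)*I*(jBP a + jBP b - jBP c))) *
        (ScalP u a L * ScalP u b L * (starRingEnd ℂ) (ScalP u c L) / ScalP u (vac u) L) := by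
  rw [Scal_rot u hu a L hL, Scal_rot u hu b L hL, Scal_rot u hu c L hL,
    Scal_rot u hu (vac u) L hL]
  rw [map_mul, conj_phase2]
  have hvac : exp (-2*(Real.pi:ℂ)*I*jBP (vac u)) = 1 := by
    rw [jBP_vac, mul_zero, Complex.exp_zero]
  rw [hvac]
  have hexp : exp (-2*(Real.pi:ℂ)*I*jBP a) * exp (-2*(Real.pi:ℂ)*I*jBP b)
      * exp (2*(Real.pi:ℂ)*I*jBP c)
      = exp (-(2*(Real.pi:ℂ)*I*(jBP a + jBP b - jBP c))) * 1 := by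
    rw [← Complex.exp_add, ← Complex.exp_add, mul_one]
    congr 1
    ring
  rw [scal_div _ _ _ _ _ _ _ _ (one_ne_zero : (1:ℂ) ≠ 0), hexp]
  rw [mul_one, div_one]

/-- For odd `u ≥ 3` the vacuum rows of both S-matrices are nonvanishing and the
Verlinde-formula fusion multiplicities of the Bershadsky–Polyakov minimal model
coincide with those of the level-`(u-3)` sl₃ WZW model. -/
theorem stmt10 (u : ℕ) (hu : 3 ≤ u) (hodd : Odd u) :
    (∀ L ∈ Pplus u, ScalP u (vac u) L ≠ 0 ∧ SBP u (vac u) L ≠ 0) ∧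
    (∀ a ∈ Pplus u, ∀ b ∈ Pplus u, ∀ c ∈ Pplus u, NBP u a b c = Nsl u a b c) := by
  have hodd' : u % 2 = 1 := Nat.odd_iff.mp hodd
  constructor
  · intro L hL
    refine ⟨Scal_vac_ne u hu L hL, ?_⟩
    rw [SBP_eq u hu hodd' (vac u) L hL]
    have hDne : -((epsZ u L : ℤ):ℂ) ≠ 0 := by
      rcases epsC_pm u L with h | h <;> rw [h] <;> norm_num
    exact mul_ne_zero (mul_ne_zero hDne (Complex.exp_ne_zero _))
      (Scal_vac_ne u hu (sigma u L) (sigma_mem u hu hodd' hL))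
  · intro a ha b hb c hc
    have h1 := NBP_eq u hu hodd' a b c
    have h2 : Nsl u a b c
        = exp (-(2*(Real.pi:ℂ)*I*(jBP a + jBP b - jBP c))) * Nsl u a b c := by
      conv_lhs => rw [Nsl]
      rw [← rot_sum u (fun L => ScalP u a L * ScalP u b L * (starRingEnd ℂ) (ScalP u c L)
        / ScalP u (vac u) L)]
      rw [Nsl, Finset.mul_sum]
      exact Finset.sum_congr rfl fun L hL => termB u hu a b c L hL
    rw [h1]
    nth_rewrite 1 [h2]
    rw [← mul_assoc, ← Complex.exp_add, add_neg_cancel, Complex.exp_zero, one_mul]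

end
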